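/- For every n ≥ 2 and every integer k with 1 ≤ k ≤ ⌊n/2⌋, the real number −(5 + tan²((2k−1)π/(2n)))/4 is a root of Q_n, i.e. the evaluation of Q_n at −(5 + tan²((2k−1)π/(2n)))/4 equals 0. -/

import Mathlib

open Polynomial

/-- The cube polynomials `Q n` of the matchable Lucas cubes. -/
noncomputable def Q : ℕ → Polynomial ℤ
  | 0 => 1
  | 1 => 2 + X
  | 2 => 3 + 2 * X
  | 3 => 4 + 3 * X
  | (n + 4) => Q (n + 3) + (1 + X) * Q (n + 2)

/-- `q n k` : the number of `k`-dimensional induced hypercubes of `Ω_n`,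
i.e. the coefficient of `x^k` in `Q n`. -/
noncomputable def q (n k : ℕ) : ℤ := (Q n).coeff k

theorem roots_of_Q (n : ℕ) (hn : 2 ≤ n) (k : ℕ) (hk1 : 1 ≤ k) (hk2 : k ≤ n / 2) :
    Polynomial.aeval
        (-(5 + Real.tan ((2 * (k : ℝ) - 1) * Real.pi / (2 * n)) ^ 2) / 4) (Q n) = 0 := by
  set θ : ℝ := (2 * (k : ℝ) - 1) * Real.pi / (2 * n) with hθdef
  set x : ℝ := -(5 + Real.tan θ ^ 2) / 4 with hxdef
  have hnR : (2 : ℝ) ≤ (n : ℝ) := by exact_mod_cast hn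
  have hkR : (1 : ℝ) ≤ (k : ℝ) := by exact_mod_cast hk1
  have h2k : 2 * k ≤ n := by
    have := (Nat.le_div_iff_mul_le (by norm_num : 0 < 2)).mp hk2
    omega
  have h2kR : 2 * (k : ℝ) ≤ (n : ℝ) := by exact_mod_cast h2k
  have hπ := Real.pi_pos
  have hθpos : 0 < θ := by
    apply div_pos
    · apply mul_pos (by linarith) hπ
    · linarith
  have hθlt : θ < Real.pi / 2 := by
    rw [hθdef, div_lt_div_iff₀ (by linarith) (by norm_num)]
    nlinarith
  set c : ℝ := Real.cos θ with hcdef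
  have hc : 0 < c := Real.cos_pos_of_mem_Ioo ⟨by linarith, hθlt⟩
  have hc' : c ≠ 0 := ne_of_gt hc
  have hs : Real.sin θ ^ 2 = 1 - c ^ 2 := Real.sin_sq θ
  -- x in terms of c
  have hx : x = -(4 * c ^ 2 + 1) / (4 * c ^ 2) := by
    rw [hxdef, Real.tan_eq_sin_div_cos]
    rw [← hcdef]
    field_simp
    nlinarith [hs]
  have h1x : (1 + x) * (4 * c ^ 2) = -1 := by
    rw [hx]; field_simp; ring
  -- key identity
  have key : ∀ m : ℕ,
      (Polynomial.aeval x (Q (m + 2)) * (2 * c) ^ (m + 2) = 2 * Real.cos ((m + 2 : ℕ) * θ)) ∧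
      (Polynomial.aeval x (Q (m + 3)) * (2 * c) ^ (m + 3) = 2 * Real.cos ((m + 3 : ℕ) * θ)) := by
    intro m
    induction m with
    | zero =>
      constructor
      · have hQ2 : Q 2 = 3 + 2 * X := rfl
        rw [hQ2]
        simp only [map_add, map_mul, map_ofNat, aeval_X]
        push_cast
        rw [Real.cos_two_mul, ← hcdef, hx]
        field_simp
        ring
      · have hQ3 : Q 3 = 4 + 3 * X := rfl
        rw [hQ3]
        simp only [map_add, map_mul, map_ofNat, aeval_X]
        push_cast
        rw [Real.cos_three_mul, ← hcdef, hx]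
        field_simp
        ring
    | succ m ih =>
      obtain ⟨h2, h3⟩ := ih
      refine ⟨h3, ?_⟩
      have hQ : Q (m + 4) = Q (m + 3) + (1 + X) * Q (m + 2) := rfl
      rw [hQ]
      simp only [map_add, map_mul, map_one, aeval_X]
      push_cast at h2 h3 ⊢
      have e4 : ((m : ℝ) + 1 + 3) * θ = ((m : ℝ) + 4) * θ := by ring
      have e3 : ((m : ℝ) + 1 + 2) * θ = ((m : ℝ) + 3) * θ := by ring
      rw [e4]
      have htrig : Real.cos (((m : ℝ) + 4) * θ)
          = 2 * c * Real.cos (((m : ℝ) + 3) * θ) - Real.cos (((m : ℝ) + 2) * θ) := by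
        have e1 : ((m : ℝ) + 4) * θ = ((m : ℝ) + 3) * θ + θ := by ring
        have e2 : ((m : ℝ) + 2) * θ = ((m : ℝ) + 3) * θ - θ := by ring
        rw [e1, e2, Real.cos_add, Real.cos_sub, ← hcdef]
        ring
      linear_combination (2 * c) * h3 + ((1 + x) * (2 * c) ^ 2) * h2
        + (2 * Real.cos (((m : ℝ) + 2) * θ)) * h1x - 2 * htrig
  -- apply at m = n - 2
  obtain ⟨m, rfl⟩ : ∃ m, n = m + 2 := ⟨n - 2, by omega⟩
  have hkey := (key m).1
  have hcosn : Real.cos ((m + 2 : ℕ) * θ) = 0 := by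
    have hn0 : ((m : ℝ) + 2) ≠ 0 := by positivity
    have : ((m + 2 : ℕ) : ℝ) * θ = (k : ℝ) * Real.pi - Real.pi / 2 := by
      rw [hθdef]
      push_cast
      field_simp
    rw [this, Real.cos_sub]
    simp [Real.sin_nat_mul_pi]
  have hpow : (2 * c) ^ (m + 2) ≠ 0 := by positivity
  have h0 : Polynomial.aeval x (Q (m + 2)) * (2 * c) ^ (m + 2) = 0 := by
    rw [hkey, hcosn]; ring
  exact (mul_eq_zero.mp h0).resolve_right hpow
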